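/- Let δ > 0, let Q : ℝ → Matrix (Fin N) (Fin N) ℝ be continuous with Q t a generator matrix for every t ≥ 0, and let μ : ℝ → (Fin N → ℝ) satisfy HasDerivAt μ (δ⁻¹ • ((Q t)ᵀ *ᵥ μ t)) t for all t ≥ 0. If μ 0 lies in the probability simplex Δ, then μ t ∈ Δ for all t ≥ 0: every component stays nonnegative and the total mass ∑ i, μ i t stays equal to 1. -/

import Mathlib

open Matrix

/-- The probability simplex on `Fin N`. -/
def probSimplex (N : ℕ) : Set (Fin N → ℝ) :=
  {μ | (∀ i, 0 ≤ μ i) ∧ ∑ i, μ i = 1}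

/-- A generator (transition-rate) matrix: nonnegative off-diagonal entries and zero row sums. -/
def IsGenerator {N : ℕ} (Q : Matrix (Fin N) (Fin N) ℝ) : Prop :=
  (∀ i j, i ≠ j → 0 ≤ Q i j) ∧ (∀ i, ∑ j, Q i j = 0)

theorem simplex_invariance {N : ℕ} (hN : 1 ≤ N) (δ : ℝ) (hδ : 0 < δ)
    (Q : ℝ → Matrix (Fin N) (Fin N) ℝ) (hQcont : Continuous Q)
    (hQgen : ∀ t : ℝ, 0 ≤ t → IsGenerator (Q t))
    (μ : ℝ → (Fin N → ℝ))
    (hμ : ∀ t : ℝ, 0 ≤ t → HasDerivAt μ (δ⁻¹ • ((Q t)ᵀ *ᵥ μ t)) t)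
    (h0 : μ 0 ∈ probSimplex N) :
    ∀ t : ℝ, 0 ≤ t → μ t ∈ probSimplex N := by
  obtain ⟨h0nn, h0sum⟩ := h0
  intro T hT
  -- continuity of μ on [0, ∞)
  have hμcont : ∀ t : ℝ, 0 ≤ t → ContinuousAt μ t := fun t ht => (hμ t ht).continuousAt
  have hμcontOn : ContinuousOn μ (Set.Icc 0 T) := fun t ht =>
    (hμcont t ht.1).continuousWithinAt
  -- entry continuity of Q
  have hQentry : ∀ i j : Fin N, Continuous fun t => Q t i j := by
    intro i j
    exact (continuous_apply j).comp ((continuous_apply i).comp hQcont)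
  -- Part 1: mass conservation
  have hmass : ∑ i, μ T i = 1 := by
    have hder : ∀ t ∈ Set.uIcc 0 T, HasDerivAt (fun s => ∑ i, μ s i) 0 t := by
      intro t ht
      rw [Set.uIcc_of_le hT] at ht
      have h1 := hasDerivAt_pi.mp (hμ t ht.1)
      have h2 : HasDerivAt (fun s => ∑ i, μ s i)
          (∑ i, (δ⁻¹ • ((Q t)ᵀ *ᵥ μ t)) i) t := HasDerivAt.fun_sum fun i _ => h1 i
      convert h2 using 1
      have hz : ∑ i, (δ⁻¹ • ((Q t)ᵀ *ᵥ μ t)) i = 0 := by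
        simp only [Pi.smul_apply, smul_eq_mul, mulVec, dotProduct, transpose_apply]
        rw [← Finset.mul_sum, Finset.sum_comm]
        have hrow : ∀ j ∈ Finset.univ, ∑ i, Q t j i * μ t j = 0 := by
          intro j _
          rw [← Finset.sum_mul, (hQgen t ht.1).2 j, zero_mul]
        rw [Finset.sum_congr rfl hrow]
        simp
      rw [hz]
    have hInt : IntervalIntegrable (fun _ : ℝ => (0 : ℝ)) MeasureTheory.volume 0 T :=
      intervalIntegrable_const
    have := intervalIntegral.integral_eq_sub_of_hasDerivAt hder hInt
    simp only [intervalIntegral.integral_zero] at this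
    have h := this.symm
    rw [sub_eq_zero] at h
    rw [h, h0sum]
  -- Part 2: nonnegativity
  -- bound on Q entries on [0,T]
  set g : ℝ → ℝ := fun t => ∑ i, ∑ j, |Q t i j| with hg_def
  have hgcont : Continuous g := by
    apply continuous_finset_sum
    intro i _
    apply continuous_finset_sum
    intro j _
    exact (hQentry i j).abs
  obtain ⟨C, hC⟩ := (isCompact_Icc (a := (0:ℝ)) (b := T)).exists_bound_of_continuousOn
    hgcont.continuousOn
  have hg_nonneg : ∀ t, 0 ≤ g t := by
    intro t
    exact Finset.sum_nonneg fun i _ => Finset.sum_nonneg fun j _ => abs_nonneg _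
  have hgC : ∀ t ∈ Set.Icc (0:ℝ) T, g t ≤ C := by
    intro t ht
    have := hC t ht
    rwa [Real.norm_eq_abs, abs_of_nonneg (hg_nonneg t)] at this
  have hC0 : 0 ≤ C := le_trans (hg_nonneg 0) (hgC 0 ⟨le_refl 0, hT⟩)
  set c : ℝ := δ⁻¹ * C with hc_def
  have hc0 : 0 ≤ c := mul_nonneg (inv_nonneg.mpr hδ.le) hC0
  -- entrywise bound on single entries
  have hentry_le : ∀ t ∈ Set.Icc (0:ℝ) T, ∀ i j, |Q t i j| ≤ g t := by
    intro t _ i j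
    calc |Q t i j| ≤ ∑ j', |Q t i j'| :=
          Finset.single_le_sum (fun k _ => abs_nonneg (Q t i k)) (Finset.mem_univ j)
      _ ≤ g t := Finset.single_le_sum
          (fun k _ => Finset.sum_nonneg fun l _ => abs_nonneg (Q t k l)) (Finset.mem_univ i)
  -- the transformed ODE matrix
  set A : ℝ → Fin N → Fin N → ℝ :=
    fun t i j => δ⁻¹ * Q t j i + (if i = j then c else 0) with hA_def
  set ν : ℝ → Fin N → ℝ := fun t i => Real.exp (c * t) * μ t i with hν_def
  have hA_nonneg : ∀ t ∈ Set.Icc (0:ℝ) T, ∀ i j, 0 ≤ A t i j := by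
    intro t ht i j
    by_cases hij : i = j
    · subst hij
      have h1 : -(g t) ≤ Q t i i := by
        have := hentry_le t ht i i
        have h2 := neg_abs_le (Q t i i)
        linarith
      have h3 : g t ≤ C := hgC t ht
      have h4 : -(δ⁻¹ * C) ≤ δ⁻¹ * Q t i i := by
        have := mul_le_mul_of_nonneg_left (le_trans (neg_le_neg h3) h1)
          (inv_nonneg.mpr hδ.le)
        linarith [this]
      have h5 : A t i i = δ⁻¹ * Q t i i + c := by simp [hA_def]
      rw [h5, hc_def]
      linarith
    · simp only [hA_def, if_neg hij]
      have := (hQgen t ht.1).1 j i (fun h => hij h.symm)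
      have := mul_nonneg (inv_nonneg.mpr hδ.le) this
      linarith
  have hA_row : ∀ t ∈ Set.Icc (0:ℝ) T, ∀ i, ∑ j, A t i j ≤ 2 * c := by
    intro t ht i
    have h1 : ∑ j, A t i j = δ⁻¹ * (∑ j, Q t j i) + c := by
      simp only [hA_def]
      rw [Finset.sum_add_distrib, Finset.sum_ite_eq (Finset.univ) i (fun _ => c)]
      simp [Finset.mul_sum]
    rw [h1]
    have h2 : ∑ j, Q t j i ≤ ∑ j, |Q t j i| :=
      Finset.sum_le_sum fun j _ => le_abs_self _
    have h3 : ∑ j, |Q t j i| ≤ g t := by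
      apply Finset.sum_le_sum
      intro j _
      exact Finset.single_le_sum (fun k _ => abs_nonneg (Q t j k)) (Finset.mem_univ i)
    have h4 : δ⁻¹ * (∑ j, Q t j i) ≤ δ⁻¹ * C := by
      apply mul_le_mul_of_nonneg_left _ (inv_nonneg.mpr hδ.le)
      exact le_trans h2 (le_trans h3 (hgC t ht))
    simp only [hc_def]
    linarith
  -- derivative of ν components
  have hν_deriv : ∀ t : ℝ, 0 ≤ t → ∀ i,
      HasDerivAt (fun s => ν s i) (∑ j, A t i j * ν t j) t := by
    intro t ht i
    have hexp : HasDerivAt (fun s : ℝ => Real.exp (c * s)) (Real.exp (c * t) * c) t := by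
      have h1 : HasDerivAt (fun s : ℝ => c * s) c t := by
        simpa using (hasDerivAt_id t).const_mul c
      exact h1.exp
    have hcomp : HasDerivAt (fun s => μ s i) ((δ⁻¹ • ((Q t)ᵀ *ᵥ μ t)) i) t :=
      hasDerivAt_pi.mp (hμ t ht) i
    have hmul := hexp.fun_mul hcomp
    refine hmul.congr_deriv (Eq.symm ?_)
    simp only [hν_def, hA_def, Pi.smul_apply, smul_eq_mul, mulVec, dotProduct,
      transpose_apply, add_mul, ite_mul, zero_mul, Finset.sum_add_distrib,
      Finset.sum_ite_eq, Finset.mem_univ, if_true, Finset.mul_sum]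
    have e1 : ∀ j : Fin N, δ⁻¹ * Q t j i * (Real.exp (c * t) * μ t j)
        = Real.exp (c * t) * (δ⁻¹ * (Q t j i * μ t j)) := fun j => by ring
    simp only [e1]
    ring
  -- continuity of ν on [0,T]
  have hνcontOn : ∀ i, ContinuousOn (fun s => ν s i) (Set.Icc 0 T) := by
    intro i
    apply ContinuousOn.mul
    · exact (Real.continuous_exp.comp (continuous_const.mul continuous_id)).continuousOn
    · exact (continuous_apply i).comp_continuousOn hμcontOn
  -- bound on ν
  have hFcont : ContinuousOn (fun t => ∑ i, |ν t i|) (Set.Icc 0 T) := by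
    apply continuousOn_finset_sum
    intro i _
    exact (hνcontOn i).abs
  obtain ⟨B, hB⟩ := (isCompact_Icc (a := (0:ℝ)) (b := T)).exists_bound_of_continuousOn hFcont
  have hB' : ∀ t ∈ Set.Icc (0:ℝ) T, ∀ i, -B ≤ ν t i := by
    intro t ht i
    have h1 : |ν t i| ≤ ∑ k, |ν t k| :=
      Finset.single_le_sum (fun k _ => abs_nonneg (ν t k)) (Finset.mem_univ i)
    have h2 := hB t ht
    rw [Real.norm_eq_abs,
      abs_of_nonneg (Finset.sum_nonneg fun k _ => abs_nonneg (ν t k))] at h2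
    have h3 := neg_abs_le (ν t i)
    linarith
  have hB0 : 0 ≤ B := by
    have h2 := hB 0 ⟨le_refl 0, hT⟩
    rw [Real.norm_eq_abs,
      abs_of_nonneg (Finset.sum_nonneg fun k _ => abs_nonneg (ν 0 k))] at h2
    exact le_trans (Finset.sum_nonneg fun k _ => abs_nonneg (ν 0 k)) h2
  set M : ℝ := 2 * c with hM_def
  have hM0 : 0 ≤ M := by positivity
  -- the key iteration bound
  have key : ∀ n : ℕ, ∀ t ∈ Set.Icc (0:ℝ) T, ∀ i,
      -(B * (M ^ n * t ^ n / (n.factorial : ℝ))) ≤ ν t i := by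
    intro n
    induction n with
    | zero =>
      intro t ht i
      simpa using hB' t ht i
    | succ n ih =>
      intro t ht i
      set K : ℝ := B * M ^ (n + 1) / (n.factorial : ℝ) with hK_def
      have hK0 : 0 ≤ K := by positivity
      -- FTC
      have hder : ∀ s ∈ Set.uIcc (0:ℝ) t,
          HasDerivAt (fun u => ν u i) (∑ j, A s i j * ν s j) s := by
        intro s hs
        rw [Set.uIcc_of_le ht.1] at hs
        exact hν_deriv s hs.1 i
      have hDcont : ContinuousOn (fun s => ∑ j, A s i j * ν s j) (Set.Icc 0 t) := by
        apply continuousOn_finset_sum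
        intro j _
        apply ContinuousOn.mul
        · simp only [hA_def]
          exact ((continuous_const.mul (hQentry j i)).add continuous_const).continuousOn
        · exact (hνcontOn j).mono (Set.Icc_subset_Icc_right ht.2)
      have hsubT : Set.Icc (0:ℝ) t ⊆ Set.Icc 0 T := Set.Icc_subset_Icc_right ht.2
      have hInt : IntervalIntegrable (fun s => ∑ j, A s i j * ν s j)
          MeasureTheory.volume 0 t := by
        apply ContinuousOn.intervalIntegrable
        rwa [Set.uIcc_of_le ht.1]
      have hftc := intervalIntegral.integral_eq_sub_of_hasDerivAt hder hInt
      -- lower bound on the integrand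
      have hfacpos : (0:ℝ) < (n.factorial : ℝ) := by positivity
      have hlow : ∀ s ∈ Set.Icc (0:ℝ) t,
          -(M * (B * M ^ n / (n.factorial : ℝ)) * s ^ n) ≤ ∑ j, A s i j * ν s j := by
        intro s hs
        have hs' : s ∈ Set.Icc (0:ℝ) T := hsubT hs
        have hL0 : 0 ≤ B * (M ^ n * s ^ n / (n.factorial : ℝ)) := by
          have := hs.1
          positivity
        have h1 : ∀ j ∈ Finset.univ,
            A s i j * (-(B * (M ^ n * s ^ n / (n.factorial : ℝ)))) ≤ A s i j * ν s j :=
          fun j _ => mul_le_mul_of_nonneg_left (ih s hs' j) (hA_nonneg s hs' i j)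
        have h2 := Finset.sum_le_sum h1
        have h3 : ∑ j, A s i j * (-(B * (M ^ n * s ^ n / (n.factorial : ℝ))))
            = (∑ j, A s i j) * (-(B * (M ^ n * s ^ n / (n.factorial : ℝ)))) :=
          (Finset.sum_mul _ _ _).symm
        have h4 : (∑ j, A s i j) * (B * (M ^ n * s ^ n / (n.factorial : ℝ)))
            ≤ M * (B * (M ^ n * s ^ n / (n.factorial : ℝ))) :=
          mul_le_mul_of_nonneg_right (hA_row s hs' i) hL0
        have h5 : -(M * (B * M ^ n / (n.factorial : ℝ)) * s ^ n)
            = -(M * (B * (M ^ n * s ^ n / (n.factorial : ℝ)))) := by ring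
        rw [h5]
        calc -(M * (B * (M ^ n * s ^ n / (n.factorial : ℝ))))
            ≤ -((∑ j, A s i j) * (B * (M ^ n * s ^ n / (n.factorial : ℝ)))) := by linarith
          _ = (∑ j, A s i j) * (-(B * (M ^ n * s ^ n / (n.factorial : ℝ)))) := by ring
          _ = ∑ j, A s i j * (-(B * (M ^ n * s ^ n / (n.factorial : ℝ)))) := h3.symm
          _ ≤ ∑ j, A s i j * ν s j := h2
      -- integrate the lower bound
      have hIntLow : IntervalIntegrable
          (fun s => -(M * (B * M ^ n / (n.factorial : ℝ)) * s ^ n))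
          MeasureTheory.volume 0 t := by
        apply ContinuousOn.intervalIntegrable
        exact ((continuous_const.mul (continuous_pow n)).neg).continuousOn
      have hmono := intervalIntegral.integral_mono_on ht.1 hIntLow hInt hlow
      have hIL : (∫ s in (0:ℝ)..t, -(M * (B * M ^ n / (n.factorial : ℝ)) * s ^ n))
          = -(M * (B * M ^ n / (n.factorial : ℝ)) * (t ^ (n + 1) / (n + 1))) := by
        rw [intervalIntegral.integral_neg, intervalIntegral.integral_const_mul,
          integral_pow]
        rw [zero_pow (Nat.succ_ne_zero n)]
        ring
      rw [hIL, hftc] at hmono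
      have hν0 : 0 ≤ ν 0 i := by
        simp only [hν_def, mul_zero, Real.exp_zero, one_mul]
        exact h0nn i
      have hfs : ((n + 1).factorial : ℝ) = ((n : ℝ) + 1) * (n.factorial : ℝ) := by
        rw [Nat.factorial_succ]
        push_cast
        ring
      have hgoal : -(B * (M ^ (n + 1) * t ^ (n + 1) / ((n + 1).factorial : ℝ)))
          = -(M * (B * M ^ n / (n.factorial : ℝ)) * (t ^ (n + 1) / (n + 1))) := by
        rw [hfs]
        field_simp
        ring
      rw [hgoal]
      linarith
  -- pass to the limit
  have hν_nonneg : ∀ i, 0 ≤ ν T i := by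
    intro i
    have hTmem : T ∈ Set.Icc (0:ℝ) T := ⟨hT, le_refl T⟩
    have hlim : Filter.Tendsto
        (fun n : ℕ => -(B * (M ^ n * T ^ n / (n.factorial : ℝ)))) Filter.atTop (nhds 0) := by
      have h1 : (fun n : ℕ => -(B * (M ^ n * T ^ n / (n.factorial : ℝ))))
          = fun n : ℕ => -(B * ((M * T) ^ n / (n.factorial : ℝ))) := by
        funext n
        rw [mul_pow M T]
      rw [h1]
      have h2 := (FloorSemiring.tendsto_pow_div_factorial_atTop (M * T)).const_mul B
      have h3 := h2.neg
      simpa using h3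
    exact le_of_tendsto hlim (Filter.Eventually.of_forall fun n => key n T hTmem i)
  constructor
  · intro i
    have h1 := hν_nonneg i
    simp only [hν_def] at h1
    by_contra hneg
    push_neg at hneg
    nlinarith [Real.exp_pos (c * T)]
  · exact hmass
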